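/- Let n ≥ 1, let σ = (σ_1, …, σ_{n+1}) be positive real numbers, and let f, φ : ℝ^{n+1} → ℝ be differentiable functions that are quasihomogeneous of types (σ, m) and (σ, d) respectively, with m > 0 and d > 0. If x ∈ ℝ^{n+1} satisfies f(x) = 0, φ(x) ≠ 0 and ∇f(x) ≠ 0, then the gradients ∇f(x) and ∇φ(x) are linearly independent; in particular the level sets {f = 0} and {φ = φ(x)} meet transversely at x. -/

import Mathlib

lemma apply_eq_sum_single (n : ℕ) (L : (Fin (n + 1) → ℝ) →L[ℝ] ℝ)
    (w : Fin (n + 1) → ℝ) :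
    L w = ∑ j, w j * L (Pi.single j 1) := by
  have hw : w = ∑ j, w j • (Pi.single j (1:ℝ) : Fin (n+1) → ℝ) := by
    funext k
    simp [Finset.sum_apply, Pi.single_apply]
  conv_lhs => rw [hw]
  rw [map_sum]
  simp [smul_eq_mul]

lemma euler_identity (n : ℕ) (σ : Fin (n + 1) → ℝ)
    (m : ℝ) (g : (Fin (n + 1) → ℝ) → ℝ) (hg : Differentiable ℝ g)
    (hq : ∀ t : ℝ, 0 < t → ∀ x : Fin (n + 1) → ℝ,
      g (fun j => t ^ (σ j) * x j) = t ^ m * g x)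
    (x : Fin (n + 1) → ℝ) :
    fderiv ℝ g x (fun j => σ j * x j) = m * g x := by
  have h1 : HasDerivAt (fun t : ℝ => (fun j => t ^ (σ j) * x j : Fin (n+1) → ℝ))
      (fun j => σ j * x j) 1 := by
    rw [hasDerivAt_pi]
    intro j
    have := (Real.hasDerivAt_rpow_const (x := (1:ℝ)) (p := σ j)
      (Or.inl one_ne_zero)).mul_const (x j)
    simpa using this
  have hpt : (fun j => (1:ℝ) ^ (σ j) * x j) = x := by
    funext j; simp [Real.one_rpow]
  have h2 : HasDerivAt (fun t : ℝ => g (fun j => t ^ (σ j) * x j))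
      (fderiv ℝ g x (fun j => σ j * x j)) 1 := by
    have hF : HasFDerivAt g (fderiv ℝ g x) (fun j => (1:ℝ) ^ (σ j) * x j) := by
      rw [hpt]; exact (hg x).hasFDerivAt
    exact hF.comp_hasDerivAt 1 h1
  have heq : (fun t : ℝ => g (fun j => t ^ (σ j) * x j)) =ᶠ[nhds 1]
      (fun t : ℝ => t ^ m * g x) := by
    filter_upwards [eventually_gt_nhds one_pos] with t ht
    exact hq t ht x
  have h3 : HasDerivAt (fun t : ℝ => t ^ m * g x)
      (fderiv ℝ g x (fun j => σ j * x j)) 1 := h2.congr_of_eventuallyEq heq.symm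
  have h4 : HasDerivAt (fun t : ℝ => t ^ m * g x) (m * g x) 1 := by
    have := (Real.hasDerivAt_rpow_const (x := (1:ℝ)) (p := m)
      (Or.inl one_ne_zero)).mul_const (g x)
    simpa using this
  exact h3.unique h4

/-- **Transversality of a quasihomogeneous hypersurface and a quasihomogeneous gauge level set.**
If `f, φ : ℝ^{n+1} → ℝ` are differentiable and quasihomogeneous of types `(σ, m)` and `(σ, d)`
with `m, d > 0`, and `x` satisfies `f x = 0`, `φ x ≠ 0`, `∇f(x) ≠ 0`, then `∇f(x)` and `∇φ(x)`
are linearly independent (so the level sets `{f = 0}` and `{φ = φ x}` meet transversely at `x`). -/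
theorem gradients_linearIndependent_of_quasihomogeneous
    (n : ℕ) (hn : 1 ≤ n) (σ : Fin (n + 1) → ℝ) (hσ : ∀ j, 0 < σ j)
    (m d : ℝ) (hm : 0 < m) (hd : 0 < d)
    (f φ : (Fin (n + 1) → ℝ) → ℝ)
    (hf : Differentiable ℝ f) (hφ : Differentiable ℝ φ)
    (hqf : ∀ t : ℝ, 0 < t → ∀ x : Fin (n + 1) → ℝ,
      f (fun j => t ^ (σ j) * x j) = t ^ m * f x)
    (hqφ : ∀ t : ℝ, 0 < t → ∀ x : Fin (n + 1) → ℝ,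
      φ (fun j => t ^ (σ j) * x j) = t ^ d * φ x)
    (x : Fin (n + 1) → ℝ) (hx0 : f x = 0) (hx1 : φ x ≠ 0)
    (hgrad : (fun j => fderiv ℝ f x (Pi.single j 1)) ≠ (0 : Fin (n + 1) → ℝ)) :
    LinearIndependent ℝ
      ![fun j => fderiv ℝ f x (Pi.single j 1),
        fun j => fderiv ℝ φ x (Pi.single j 1)] := by
  set v : Fin (n + 1) → ℝ := fun j => σ j * x j with hv
  have hef : fderiv ℝ f x v = 0 := by
    rw [euler_identity n σ m f hf hqf x, hx0, mul_zero]
  have heφ : fderiv ℝ φ x v = d * φ x := euler_identity n σ d φ hφ hqφ x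
  rw [LinearIndependent.pair_iff]
  intro s t hst
  have hkey : ∀ j, s * fderiv ℝ f x (Pi.single j 1) + t * fderiv ℝ φ x (Pi.single j 1) = 0 := by
    intro j
    have := congrFun hst j
    simpa [smul_eq_mul] using this
  have hsum : s * fderiv ℝ f x v + t * fderiv ℝ φ x v = 0 := by
    rw [apply_eq_sum_single n (fderiv ℝ f x) v, apply_eq_sum_single n (fderiv ℝ φ x) v,
      Finset.mul_sum, Finset.mul_sum, ← Finset.sum_add_distrib]
    refine Finset.sum_eq_zero fun j _ => ?_
    have := hkey j
    linear_combination (σ j * x j) * this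
  rw [hef, heφ, mul_zero, zero_add] at hsum
  have ht : t = 0 := by
    rcases mul_eq_zero.1 hsum with h | h
    · exact h
    · exact absurd h (mul_ne_zero hd.ne' hx1)
  subst ht
  constructor
  · by_contra hs
    apply hgrad
    funext j
    have := hkey j
    simp only [zero_mul, add_zero] at this
    have := mul_eq_zero.1 this
    simpa [hs] using this.resolve_left hs
  · rfl
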